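/- arXiv:2507.03195 — 4 statements merged into one kernel-verified Lean document; each statement's English description precedes it below -/
import Mathlib

section
/- Let Γ be a countable group, let Γ ↷ᵃ (X, μ) be a p.m.p. action, and let G be a Polish group. The formulas c(x)(β)(α) = θ(β⁻¹, (α⁻¹)ᵃ·x) and θ(γ, x) = c(x)(γ⁻¹)(e) define mutually inverse bijections between measurable cochains θ : Γ × X → G and measurable t-equivariant maps c : X → C¹(Γ, G^Γ). Moreover, under this correspondence, θ is a cocycle (i.e., θ(γ₁γ₂, x) = θ(γ₁, γ₂·x)·θ(γ₂, x) for all γ₁, γ₂ ∈ Γ and μ-almost every x) if and only if c(x) ∈ Z¹(Γ, G^Γ) for μ-almost every x. -/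
open MeasureTheory

namespace Stmt0

/-- A probability-measure-preserving action of a group `Γ` on `(X, μ)`. -/
structure PMPAction (Γ : Type*) [Group Γ] (X : Type*) [MeasurableSpace X]
    (μ : Measure X) where
  act : Γ → X → X
  measurePreserving : ∀ γ, MeasurePreserving (act γ) μ μ
  act_one : ∀ x, act 1 x = x
  act_mul : ∀ γ₁ γ₂ x, act (γ₁ * γ₂) x = act γ₁ (act γ₂ x)

variable (Γ G : Type*)

/-- `C¹(Γ, G^Γ)`: functions from `Γ` to `G^Γ` (curried). -/
abbrev C1 := Γ → Γ → G

variable [Group Γ] [Group G]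

/-- The action `t` of `Γ` on `C¹(Γ, G^Γ)`: `(αᵗ·c)(β)(γ) = c(β)(α⁻¹γ)`. -/
def tAct (α : Γ) (c : C1 Γ G) : C1 Γ G := fun β γ => c β (α⁻¹ * γ)

/-- The coboundary `∂c(α, β)(γ) = c(αβ)(γ)⁻¹ · c(β)(γα) · c(α)(γ)`. -/
def dC (c : C1 Γ G) : Γ → Γ → Γ → G :=
  fun α β γ => (c (α * β) γ)⁻¹ * c β (γ * α) * c α γ

/-- `Z¹(Γ, G^Γ)`: the set of cocycles, i.e. those `c` with `∂c(α,β)(γ) = e_G` always. -/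
def Z1 : Set (C1 Γ G) := {c | ∀ α β γ : Γ, dC Γ G c α β γ = 1}

/-- Lemma on the correspondence between cocycles and equivariant maps.
Let `Γ` be a countable group, `Γ ↷ᵃ (X, μ)` a p.m.p. action and `G` a Polish group.  The
formulas `c(x)(β)(α) = θ(β⁻¹, (α⁻¹)ᵃ·x)` and `θ(γ, x) = c(x)(γ⁻¹)(e)` define mutually
inverse bijections between measurable cochains `θ : Γ × X → G` and measurable
`t`-equivariant maps `c : X → C¹(Γ, G^Γ)`; moreover, under this correspondence `θ` is a
cocycle if and only if `c(x) ∈ Z¹(Γ, G^Γ)` for `μ`-almost every `x`. -/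
theorem stmt0 {Γ : Type*} [Group Γ] [Countable Γ]
    {X : Type*} [MeasurableSpace X] {μ : Measure X} [IsProbabilityMeasure μ]
    {G : Type*} [Group G] [TopologicalSpace G] [IsTopologicalGroup G] [PolishSpace G]
    [MeasurableSpace G] [BorelSpace G]
    (a : PMPAction Γ X μ) :
    -- (i) from cochains to equivariant maps
    (∀ θ : Γ → X → G, (∀ γ, Measurable (θ γ)) →
      Measurable (fun x : X => (fun β α : Γ => θ β⁻¹ (a.act α⁻¹ x) : C1 Γ G)) ∧
      (∀ (γ : Γ) (x : X),
        (fun β α : Γ => θ β⁻¹ (a.act α⁻¹ (a.act γ x))) =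
          tAct Γ G γ (fun β α : Γ => θ β⁻¹ (a.act α⁻¹ x))) ∧
      (∀ (γ : Γ) (x : X), (fun β α : Γ => θ β⁻¹ (a.act α⁻¹ x)) γ⁻¹ 1 = θ γ x)) ∧
    -- (ii) from equivariant maps to cochains
    (∀ c : X → C1 Γ G, Measurable c →
      (∀ (γ : Γ) (x : X), c (a.act γ x) = tAct Γ G γ (c x)) →
      (∀ γ : Γ, Measurable (fun x : X => c x γ⁻¹ 1)) ∧
      (∀ (x : X) (β α : Γ), c x β α = c (a.act α⁻¹ x) β⁻¹⁻¹ 1)) ∧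
    -- (iii) cocycles correspond to maps landing a.e. in `Z¹(Γ, G^Γ)`
    (∀ θ : Γ → X → G, (∀ γ, Measurable (θ γ)) →
      ((∀ γ₁ γ₂ : Γ, ∀ᵐ x ∂μ, θ (γ₁ * γ₂) x = θ γ₁ (a.act γ₂ x) * θ γ₂ x) ↔
        (∀ᵐ x ∂μ, (fun β α : Γ => θ β⁻¹ (a.act α⁻¹ x)) ∈ Z1 Γ G))) := by

  refine ⟨?_, ?_, ?_⟩
  · intro θ hθ
    refine ⟨?_, ?_, ?_⟩
    · exact measurable_pi_lambda _ fun β => measurable_pi_lambda _ fun α =>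
        (hθ β⁻¹).comp (a.measurePreserving α⁻¹).measurable
    · intro γ x
      funext β α
      simp [tAct, ← a.act_mul]
    · intro γ x
      simp [a.act_one]
  · intro c hc heq
    refine ⟨fun γ => (measurable_pi_apply 1).comp ((measurable_pi_apply γ⁻¹).comp hc), ?_⟩
    intro x β α
    have h := heq α⁻¹ x
    have h2 : c (a.act α⁻¹ x) β⁻¹⁻¹ 1 = c x β⁻¹⁻¹ (α⁻¹⁻¹ * 1) := by rw [h]; rfl
    simp only [inv_inv, mul_one] at h2
    simp only [inv_inv]
    exact h2.symm
  · intro θ hθ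
    constructor
    · intro h
      have key : ∀ α β γ : Γ, ∀ᵐ x ∂μ,
          dC Γ G (fun β α : Γ => θ β⁻¹ (a.act α⁻¹ x)) α β γ = 1 := by
        intro α β γ
        have h1 := h β⁻¹ α⁻¹
        have h2 := (a.measurePreserving γ⁻¹).quasiMeasurePreserving.ae h1
        filter_upwards [h2] with x hx
        simp only [dC, mul_inv_rev, a.act_mul] at hx ⊢
        rw [hx, mul_assoc, inv_mul_eq_one]
      refine ae_all_iff.2 fun α => ae_all_iff.2 fun β => ae_all_iff.2 fun γ => key α β γ
    · intro h γ₁ γ₂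
      filter_upwards [h] with x hx
      have h3 := hx γ₂⁻¹ γ₁⁻¹ 1
      simp only [dC, mul_inv_rev, inv_inv, inv_one, a.act_one, one_mul] at h3
      rw [mul_assoc, inv_mul_eq_one] at h3
      exact h3


end Stmt0
end

section
/- Let Γ be a countable group and G a Polish group. There is an assignment T ↦ r_T of a continuous retraction r_T : C¹(Γ, G^Γ) → Z¹(Γ, G^Γ) (a continuous map restricting to the identity on Z¹(Γ, G^Γ)) to each directed tree T ∈ T(Γ), such that: (1) r_{γᵈ·T}(γᵗ·c) = γᵗ·r_T(c) for all T ∈ T(Γ), c ∈ C¹(Γ, G^Γ), and γ ∈ Γ; and (2) for every α, β ∈ Γ there is a partition of T(Γ) into relatively clopen sets such that r_T(c)(β)(α) = r_{T'}(c)(β)(α) for all c ∈ C¹(Γ, G^Γ) whenever T and T' belong to a common piece of the partition. -/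
namespace Stmt1

variable (Γ G : Type*)

/-- `C¹(Γ, G^Γ)`: functions from `Γ` to `G^Γ` (curried). -/
abbrev C1 := Γ → Γ → G

variable [Group Γ] [Group G]

/-- The action `t` of `Γ` on `C¹(Γ, G^Γ)`: `(αᵗ·c)(β)(γ) = c(β)(α⁻¹γ)`. -/
def tAct (α : Γ) (c : C1 Γ G) : C1 Γ G := fun β γ => c β (α⁻¹ * γ)

/-- The coboundary `∂c(α, β)(γ) = c(αβ)(γ)⁻¹ · c(β)(γα) · c(α)(γ)`. -/
def dC (c : C1 Γ G) : Γ → Γ → Γ → G :=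
  fun α β γ => (c (α * β) γ)⁻¹ * c β (γ * α) * c α γ

/-- `Z¹(Γ, G^Γ)`: the set of cocycles. -/
def Z1 : Set (C1 Γ G) := {c | ∀ α β γ : Γ, dC Γ G c α β γ = 1}

/-- The undirected graph on `Γ` underlying a set `F ⊆ Γ × Γ` of directed edges
(given by its indicator function). -/
def graphOf {Γ : Type*} (F : Γ × Γ → Bool) : SimpleGraph Γ where
  Adj a b := a ≠ b ∧ (F (a, b) = true ∨ F (b, a) = true)
  symm := ⟨fun _ _ h => ⟨h.1.symm, h.2.symm⟩⟩
  loopless := ⟨fun _ h => h.1 rfl⟩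

/-- `F` is a directed tree on `Γ`: `F ∩ F̄ = ∅` and the graph `F ∪ F̄` is acyclic and
connected. -/
def IsDirTree {Γ : Type*} (F : Γ × Γ → Bool) : Prop :=
  (∀ q : Γ × Γ, ¬(F q = true ∧ F (q.2, q.1) = true)) ∧ (graphOf F).IsTree

/-- `T(Γ)`: the space of directed trees on `Γ`, topologized by pointwise convergence of
indicator functions. -/
def TreeSpace (Γ : Type*) : Type _ := {F : Γ × Γ → Bool // IsDirTree F}

instance : TopologicalSpace (TreeSpace Γ) :=
  inferInstanceAs (TopologicalSpace {F : Γ × Γ → Bool // IsDirTree F})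

/-- The diagonal action of `Γ` on subsets of `Γ × Γ`. -/
def dAct (γ : Γ) (F : Γ × Γ → Bool) : Γ × Γ → Bool :=
  fun q => F (γ⁻¹ * q.1, γ⁻¹ * q.2)

set_option linter.unusedSectionVars false
set_option linter.unusedVariables false

section Aux

open SimpleGraph

variable {Γ G : Type*} [Group Γ] [Group G]

/-- Value attached to a (directed-tree) edge traversal from `a` to `b`. -/
def edgeVal (F : Γ × Γ → Bool) (c : C1 Γ G) (a b : Γ) : G :=
  if F (a, b) then c (a⁻¹ * b) a else (c (b⁻¹ * a) b)⁻¹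

/-- Value of a walk: product of signed edge values, later edges multiplied on the left. -/
def walkVal (F : Γ × Γ → Bool) (c : C1 Γ G) : ∀ {x y : Γ}, (graphOf F).Walk x y → G
  | _, _, SimpleGraph.Walk.nil => 1
  | x, _, @SimpleGraph.Walk.cons _ _ _ v _ _h q => walkVal F c q * edgeVal F c x v

@[simp] lemma walkVal_nil {F : Γ × Γ → Bool} {c : C1 Γ G} {x : Γ} :
    walkVal F c (SimpleGraph.Walk.nil : (graphOf F).Walk x x) = 1 := rfl

@[simp] lemma walkVal_cons {F : Γ × Γ → Bool} {c : C1 Γ G} {x v y : Γ}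
    (h : (graphOf F).Adj x v) (q : (graphOf F).Walk v y) :
    walkVal F c (SimpleGraph.Walk.cons h q) = walkVal F c q * edgeVal F c x v := rfl

lemma walkVal_append {F : Γ × Γ → Bool} {c : C1 Γ G} {x y z : Γ}
    (p : (graphOf F).Walk x y) (q : (graphOf F).Walk y z) :
    walkVal F c (p.append q) = walkVal F c q * walkVal F c p := by
  induction p with
  | nil => simp
  | cons h p ih => simp [ih, mul_assoc]

lemma edgeVal_symm {F : Γ × Γ → Bool} {c : C1 Γ G} {a b : Γ}
    (hF : ∀ q : Γ × Γ, ¬(F q = true ∧ F (q.2, q.1) = true))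
    (h : (graphOf F).Adj a b) :
    edgeVal F c b a = (edgeVal F c a b)⁻¹ := by
  rcases (show a ≠ b ∧ _ from h).2 with h1 | h1
  · have h2 : ¬ F (b, a) = true := fun h2 => hF (a, b) ⟨h1, h2⟩
    simp [edgeVal, h1, h2]
  · have h2 : ¬ F (a, b) = true := fun h2 => hF (a, b) ⟨h2, h1⟩
    simp [edgeVal, h1, h2]

/-- The unique path between two points of a tree. -/
noncomputable def thePath {F : Γ × Γ → Bool} (hT : IsDirTree F) (x y : Γ) :
    (graphOf F).Walk x y :=
  (hT.2.existsUnique_path x y).exists.choose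

lemma thePath_isPath {F : Γ × Γ → Bool} (hT : IsDirTree F) (x y : Γ) :
    (thePath hT x y).IsPath :=
  (hT.2.existsUnique_path x y).exists.choose_spec

lemma thePath_unique {F : Γ × Γ → Bool} (hT : IsDirTree F) {x y : Γ}
    {p : (graphOf F).Walk x y} (hp : p.IsPath) : p = thePath hT x y := by
  obtain ⟨q, hq, hu⟩ := hT.2.existsUnique_path x y
  rw [hu p hp, hu _ (thePath_isPath hT x y)]

end Aux


section Aux2
open SimpleGraph
variable {Γ G : Type*} [Group Γ] [Group G]

/-- Any walk in a tree has the same value as the unique path between its endpoints. -/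
lemma walkVal_eq_thePath {F : Γ × Γ → Bool} (hT : IsDirTree F) (c : C1 Γ G) :
    ∀ {x y : Γ} (p : (graphOf F).Walk x y),
      walkVal F c p = walkVal F c (thePath hT x y) := by
  intro x y p
  haveI := Classical.decEq Γ
  induction p with
  | nil =>
    rw [← thePath_unique hT SimpleGraph.Walk.IsPath.nil]
  | @cons x v y h q ih =>
    rw [walkVal_cons, ih]
    by_cases hx : x ∈ (thePath hT v y).support
    · set p0 := thePath hT v y with hp0
      have hps : p0 = (p0.takeUntil x hx).append (p0.dropUntil x hx) :=
        (p0.take_spec hx).symm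
      have hpath : p0.IsPath := thePath_isPath hT v y
      have h1 : (p0.takeUntil x hx).IsPath := hpath.takeUntil hx
      have h2 : (p0.dropUntil x hx).IsPath := hpath.dropUntil hx
      have hd : p0.dropUntil x hx = thePath hT x y := thePath_unique hT h2
      have hsingle : SimpleGraph.Walk.cons h.symm SimpleGraph.Walk.nil
          = p0.takeUntil x hx := by
        refine (thePath_unique hT ?_).trans (thePath_unique hT h1).symm
        exact SimpleGraph.Walk.IsPath.nil.cons (by simpa using h.ne')
      calc walkVal F c p0 * edgeVal F c x v
          = (walkVal F c (p0.dropUntil x hx) * walkVal F c (p0.takeUntil x hx))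
              * edgeVal F c x v := by rw [← walkVal_append, ← hps]
        _ = walkVal F c (thePath hT x y) := by
            rw [hd, ← hsingle, walkVal_cons, walkVal_nil, one_mul,
              edgeVal_symm hT.1 h, mul_assoc, inv_mul_cancel, mul_one]
    · have : (SimpleGraph.Walk.cons h (thePath hT v y)).IsPath :=
        (thePath_isPath hT v y).cons hx
      rw [← thePath_unique hT this, walkVal_cons]

/-- Groupoid identity for values of tree paths. -/
lemma thePath_groupoid {F : Γ × Γ → Bool} (hT : IsDirTree F) (c : C1 Γ G) (x y z : Γ) :
    walkVal F c (thePath hT x z)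
      = walkVal F c (thePath hT y z) * walkVal F c (thePath hT x y) := by
  rw [← walkVal_append, walkVal_eq_thePath hT c ((thePath hT x y).append (thePath hT y z))]

end Aux2
section Aux3
open SimpleGraph
variable {Γ G : Type*} [Group Γ] [Group G]

/-- The retraction: `r_T(c)(β)(α)` is the value of the tree path from `α` to `αβ`. -/
noncomputable def ret (T : TreeSpace Γ) (c : C1 Γ G) : C1 Γ G :=
  fun β α => walkVal T.1 c (thePath T.2 α (α * β))

lemma ret_mem_Z1 (T : TreeSpace Γ) (c : C1 Γ G) : ret T c ∈ Z1 Γ G := by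
  intro α β γ
  have h := thePath_groupoid T.2 c γ (γ * α) (γ * α * β)
  simp only [dC, ret]
  rw [show γ * (α * β) = γ * α * β by group, show γ * α * β = (γ * α) * β from rfl, h]
  group

lemma ret_cocycle (T : TreeSpace Γ) (z : C1 Γ G) (hz : z ∈ Z1 Γ G) : ret T z = z := by
  have hB : ∀ β γ : Γ, z β γ = z (γ * β) 1 * (z γ 1)⁻¹ := by
    intro β γ
    have := hz γ β 1
    simp only [dC, one_mul] at this
    calc z β γ = z (γ * β) 1 * ((z (γ * β) 1)⁻¹ * z β γ * z γ 1) * (z γ 1)⁻¹ := by group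
      _ = z (γ * β) 1 * (z γ 1)⁻¹ := by rw [this]; group
  have hedge : ∀ a b : Γ, edgeVal T.1 z a b = z b 1 * (z a 1)⁻¹ := by
    intro a b
    unfold edgeVal
    split_ifs
    · rw [hB (a⁻¹ * b) a]; group
    · rw [hB (b⁻¹ * a) b]; group
  have hwalk : ∀ (x y : Γ) (p : (graphOf T.1).Walk x y),
      walkVal T.1 z p = z y 1 * (z x 1)⁻¹ := by
    intro x y p
    induction p with
    | nil => simp
    | cons h q ih => rw [walkVal_cons, ih, hedge]; group
  funext β α
  rw [ret, hwalk, ← hB]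

lemma ret_continuous [TopologicalSpace G] [IsTopologicalGroup G] (T : TreeSpace Γ) :
    Continuous fun c : C1 Γ G => ret T c := by
  refine continuous_pi fun β => continuous_pi fun α => ?_
  suffices h : ∀ (x y : Γ) (p : (graphOf T.1).Walk x y),
      Continuous fun c : C1 Γ G => walkVal T.1 c p from h _ _ _
  intro x y p
  induction p with
  | nil => simpa using continuous_const
  | @cons x v y h q ih =>
    simp only [walkVal_cons]
    refine ih.mul ?_
    unfold edgeVal
    split_ifs
    · exact (continuous_apply x).comp (continuous_apply (x⁻¹ * v))
    · have hc : Continuous fun c : C1 Γ G => c (v⁻¹ * x) v :=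
        (continuous_apply v).comp (continuous_apply (v⁻¹ * x))
      exact hc.inv

end Aux3
section Aux4
open SimpleGraph
variable {Γ G : Type*} [Group Γ] [Group G]

/-- Left translation by `γ⁻¹` as a graph homomorphism `graphOf F' →g graphOf F`
when `F' = γᵈ·F`. -/
def shiftHom (γ : Γ) (F F' : Γ × Γ → Bool) (hF : F' = dAct Γ γ F) :
    graphOf F' →g graphOf F where
  toFun a := γ⁻¹ * a
  map_rel' := by
    intro a b h
    change a ≠ b ∧ (F' (a, b) = true ∨ F' (b, a) = true) at h
    change γ⁻¹ * a ≠ γ⁻¹ * b ∧ (F (γ⁻¹ * a, γ⁻¹ * b) = true ∨ F (γ⁻¹ * b, γ⁻¹ * a) = true)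
    refine ⟨fun e => h.1 (mul_left_cancel e), ?_⟩
    have := h.2
    rw [hF] at this
    exact this

lemma shiftHom_injective (γ : Γ) (F F' : Γ × Γ → Bool) (hF : F' = dAct Γ γ F) :
    Function.Injective (shiftHom γ F F' hF) := fun a b e => mul_left_cancel e

lemma walkVal_shift (γ : Γ) (F F' : Γ × Γ → Bool) (hF : F' = dAct Γ γ F)
    (c : C1 Γ G) {x y : Γ} (p : (graphOf F').Walk x y) :
    walkVal F c (p.map (shiftHom γ F F' hF)) = walkVal F' (tAct Γ G γ c) p := by
  induction p with
  | nil => rfl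
  | @cons a v b h q ih =>
    rw [SimpleGraph.Walk.map_cons, walkVal_cons, ih, walkVal_cons]
    congr 1
    show edgeVal F c (γ⁻¹ * a) (γ⁻¹ * v) = edgeVal F' (tAct Γ G γ c) a v
    unfold edgeVal
    have hcond : F (γ⁻¹ * a, γ⁻¹ * v) = F' (a, v) := by rw [hF]; rfl
    rw [hcond]
    have e1 : (γ⁻¹ * a)⁻¹ * (γ⁻¹ * v) = a⁻¹ * v := by group
    have e2 : (γ⁻¹ * v)⁻¹ * (γ⁻¹ * a) = v⁻¹ * a := by group
    rw [e1, e2]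
    rfl

lemma ret_equivariant (γ : Γ) (T T' : TreeSpace Γ) (hTT' : T'.1 = dAct Γ γ T.1)
    (c : C1 Γ G) : ret T' (tAct Γ G γ c) = tAct Γ G γ (ret T c) := by
  funext β α
  show walkVal T'.1 (tAct Γ G γ c) (thePath T'.2 α (α * β))
      = walkVal T.1 c (thePath T.2 (γ⁻¹ * α) (γ⁻¹ * α * β))
  rw [← walkVal_shift γ T.1 T'.1 hTT' c (thePath T'.2 α (α * β))]
  have hinj := shiftHom_injective γ T.1 T'.1 hTT'
  have hpath : ((thePath T'.2 α (α * β)).map (shiftHom γ T.1 T'.1 hTT')).IsPath :=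
    SimpleGraph.Walk.map_isPath_of_injective hinj (thePath_isPath T'.2 α (α * β))
  have hend : γ⁻¹ * α * β = γ⁻¹ * (α * β) := by group
  rw [hend]
  exact congrArg (walkVal T.1 c) (thePath_unique T.2 hpath)

end Aux4
section Aux5
open SimpleGraph
variable {Γ G : Type*} [Group Γ] [Group G]

/-- Two walks with the same darts (and the same orientation data) have the same value. -/
lemma walkVal_eq_of_darts {F F' : Γ × Γ → Bool} (c : C1 Γ G) :
    ∀ {x y : Γ} (p : (graphOf F).Walk x y) {x' y' : Γ} (q : (graphOf F').Walk x' y'),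
      p.darts.map (fun d => (d.toProd, F d.toProd))
        = q.darts.map (fun d => (d.toProd, F' d.toProd)) →
      walkVal F c p = walkVal F' c q := by
  intro x y p
  induction p with
  | nil =>
    intro x' y' q hq
    cases q with
    | nil => simp
    | cons h q => simp [SimpleGraph.Walk.darts_cons] at hq
  | @cons x v y h p ih =>
    intro x' y' q hq
    cases q with
    | nil => simp [SimpleGraph.Walk.darts_cons] at hq
    | @cons x' v' y' h' q' =>
      simp only [SimpleGraph.Walk.darts_cons, List.map_cons, List.cons.injEq,
        Prod.mk.injEq] at hq
      obtain ⟨⟨⟨hx, hv⟩, hFv⟩, htail⟩ := hq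
      subst hx; subst hv
      rw [walkVal_cons, walkVal_cons, ih q' htail]
      congr 1
      unfold edgeVal
      rw [hFv]

/-- Sets defined by finitely many coordinates of the indicator are clopen. -/
lemma isClopen_agree (L : List (Γ × Γ)) (g : Γ × Γ → Bool) :
    IsClopen {T' : TreeSpace Γ | ∀ q ∈ L, T'.1 q = g q} := by
  induction L with
  | nil => simpa using isClopen_univ
  | cons a L ih =>
    have hc : Continuous fun T' : TreeSpace Γ => T'.1 a :=
      (continuous_apply a).comp continuous_subtype_val
    have h1 : IsClopen {T' : TreeSpace Γ | T'.1 a = g a} :=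
      (isClopen_discrete {g a}).preimage hc
    have hset : {T' : TreeSpace Γ | ∀ q ∈ a :: L, T'.1 q = g q}
        = {T' : TreeSpace Γ | T'.1 a = g a} ∩ {T' : TreeSpace Γ | ∀ q ∈ L, T'.1 q = g q} := by
      ext T'
      simp only [Set.mem_setOf_eq, Set.mem_inter_iff, List.mem_cons, forall_eq_or_imp]
    rw [hset]
    exact h1.inter ih

/-- Lift a walk to another graph containing all its darts. -/
lemma exists_walk_of_darts {F F' : Γ × Γ → Bool} :
    ∀ {x y : Γ} (p : (graphOf F).Walk x y),
      (∀ d ∈ p.darts, (graphOf F').Adj d.toProd.1 d.toProd.2) →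
      ∃ q : (graphOf F').Walk x y,
        q.darts.map SimpleGraph.Dart.toProd = p.darts.map SimpleGraph.Dart.toProd ∧
        q.support = p.support := by
  intro x y p
  induction p with
  | nil => exact fun _ => ⟨SimpleGraph.Walk.nil, rfl, rfl⟩
  | @cons x v y h p ih =>
    intro hd
    have hadj : (graphOf F').Adj x v :=
      hd ⟨(x, v), h⟩ (by simp [SimpleGraph.Walk.darts_cons])
    obtain ⟨q, hq1, hq2⟩ := ih fun d hdm => hd d (by simp [SimpleGraph.Walk.darts_cons, hdm])
    exact ⟨SimpleGraph.Walk.cons hadj q,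
      by simp [SimpleGraph.Walk.darts_cons, hq1],
      by simp [SimpleGraph.Walk.support_cons, hq2]⟩

/-- Signature of a tree at `(α, β)`: the darts of the path from `α` to `αβ` with their
orientations. -/
noncomputable def sigOf (α β : Γ) (T : TreeSpace Γ) : List ((Γ × Γ) × Bool) :=
  (thePath T.2 α (α * β)).darts.map (fun d => (d.toProd, T.1 d.toProd))

lemma ret_apply_eq_of_sig (α β : Γ) (T T' : TreeSpace Γ)
    (h : sigOf α β T = sigOf α β T') (c : C1 Γ G) : ret T c β α = ret T' c β α :=
  walkVal_eq_of_darts c _ _ h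

lemma sig_locally_constant (α β : Γ) (T : TreeSpace Γ) :
    ∃ U : Set (TreeSpace Γ), IsClopen U ∧ T ∈ U ∧
      ∀ T' ∈ U, sigOf α β T' = sigOf α β T := by
  set p := thePath T.2 α (α * β) with hp
  set L : List (Γ × Γ) := p.darts.map SimpleGraph.Dart.toProd
      ++ p.darts.map (fun d => (d.toProd.2, d.toProd.1)) with hL
  refine ⟨{T' | ∀ q ∈ L, T'.1 q = T.1 q}, isClopen_agree L T.1, fun q _ => rfl, ?_⟩
  intro T' hT'
  have hmem1 : ∀ d ∈ p.darts, T'.1 d.toProd = T.1 d.toProd := fun d hdm =>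
    hT' d.toProd (by rw [hL]; exact List.mem_append_left _ (List.mem_map_of_mem hdm))
  have hmem2 : ∀ d ∈ p.darts, T'.1 (d.toProd.2, d.toProd.1) = T.1 (d.toProd.2, d.toProd.1) :=
    fun d hdm =>
    hT' _ (by rw [hL]; exact List.mem_append_right _ (List.mem_map_of_mem hdm))
  have hadj : ∀ d ∈ p.darts, (graphOf T'.1).Adj d.toProd.1 d.toProd.2 := by
    intro d hdm
    have hda : (graphOf T.1).Adj d.toProd.1 d.toProd.2 := d.adj
    change d.toProd.1 ≠ d.toProd.2 ∧ (T.1 (d.toProd.1, d.toProd.2) = true ∨ T.1 (d.toProd.2, d.toProd.1) = true) at hda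
    change d.toProd.1 ≠ d.toProd.2 ∧ (T'.1 (d.toProd.1, d.toProd.2) = true ∨ T'.1 (d.toProd.2, d.toProd.1) = true)
    refine ⟨hda.1, ?_⟩
    have e1 : T'.1 (d.toProd.1, d.toProd.2) = T.1 (d.toProd.1, d.toProd.2) := by
      rw [Prod.mk.eta]; exact hmem1 d hdm
    rw [e1, hmem2 d hdm]
    exact hda.2
  obtain ⟨q, hq1, hq2⟩ := exists_walk_of_darts p hadj
  have hqpath : q.IsPath :=
    SimpleGraph.Walk.IsPath.mk' (hq2 ▸ (thePath_isPath T.2 α (α * β)).support_nodup)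
  have hqp : q = thePath T'.2 α (α * β) := thePath_unique T'.2 hqpath
  show (thePath T'.2 α (α * β)).darts.map (fun d => (d.toProd, T'.1 d.toProd))
      = p.darts.map (fun d => (d.toProd, T.1 d.toProd))
  rw [← hqp]
  have step1 : q.darts.map (fun d => (d.toProd, T'.1 d.toProd))
      = p.darts.map (fun d => (d.toProd, T'.1 d.toProd)) := by
    have := congrArg (List.map fun pr : Γ × Γ => (pr, T'.1 pr)) hq1
    simpa [List.map_map, Function.comp_def] using this
  rw [step1]
  exact List.map_congr_left fun d hdm => by rw [hmem1 d hdm]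

lemma sig_fiber_isOpen (α β : Γ) (s : List ((Γ × Γ) × Bool)) :
    IsOpen ((sigOf α β) ⁻¹' {s} : Set (TreeSpace Γ)) := by
  rw [isOpen_iff_forall_mem_open]
  intro T hT
  obtain ⟨U, hU, hTU, hconst⟩ := sig_locally_constant α β T
  refine ⟨U, fun T' hT' => ?_, hU.2, hTU⟩
  simp only [Set.mem_preimage, Set.mem_singleton_iff] at hT ⊢
  rw [hconst T' hT', hT]

lemma sig_fiber_isClopen (α β : Γ) (s : List ((Γ × Γ) × Bool)) :
    IsClopen ((sigOf α β) ⁻¹' {s} : Set (TreeSpace Γ)) := by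
  refine ⟨?_, sig_fiber_isOpen α β s⟩
  rw [← isOpen_compl_iff, isOpen_iff_forall_mem_open]
  intro T hT
  obtain ⟨U, hU, hTU, hconst⟩ := sig_locally_constant α β T
  refine ⟨U, fun T' hT' => ?_, hU.2, hTU⟩
  simp only [Set.mem_compl_iff, Set.mem_preimage, Set.mem_singleton_iff] at hT ⊢
  rw [hconst T' hT']
  exact hT

end Aux5

/-- Let `Γ` be a countable group and `G` a Polish group.  There is an
assignment `T ↦ r_T` of a continuous retraction `r_T : C¹(Γ, G^Γ) → Z¹(Γ, G^Γ)` to each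
directed tree `T ∈ T(Γ)` such that (1) `r_{γᵈ·T}(γᵗ·c) = γᵗ·r_T(c)` and (2) for every
`α, β ∈ Γ` there is a partition of `T(Γ)` into relatively clopen sets on each piece of
which `T ↦ r_T(c)(β)(α)` is constant, simultaneously for all `c`. -/
theorem stmt1 (Γ G : Type*) [Group Γ] [Countable Γ] [Group G]
    [TopologicalSpace G] [IsTopologicalGroup G] [PolishSpace G] :
    ∃ r : TreeSpace Γ → C1 Γ G → C1 Γ G,
      (∀ T : TreeSpace Γ, Continuous (r T)) ∧
      (∀ (T : TreeSpace Γ) (c : C1 Γ G), r T c ∈ Z1 Γ G) ∧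
      (∀ (T : TreeSpace Γ), ∀ z ∈ Z1 Γ G, r T z = z) ∧
      (∀ (γ : Γ) (T T' : TreeSpace Γ), T'.1 = dAct Γ γ T.1 →
        ∀ c : C1 Γ G, r T' (tAct Γ G γ c) = tAct Γ G γ (r T c)) ∧
      (∀ α β : Γ, ∃ P : Set (Set (TreeSpace Γ)),
        (∀ V ∈ P, IsClopen V) ∧
        (⋃₀ P = Set.univ) ∧
        (P.PairwiseDisjoint id) ∧
        (∀ V ∈ P, ∀ T ∈ V, ∀ T' ∈ V, ∀ c : C1 Γ G, r T c β α = r T' c β α)) := by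
  refine ⟨ret, ret_continuous, ret_mem_Z1, fun T z hz => ret_cocycle T z hz,
    fun γ T T' h c => ret_equivariant γ T T' h c, ?_⟩
  intro α β
  refine ⟨Set.range fun T₀ : TreeSpace Γ => sigOf α β ⁻¹' {sigOf α β T₀}, ?_, ?_, ?_, ?_⟩
  · rintro V ⟨T₀, rfl⟩
    exact sig_fiber_isClopen α β _
  · ext T
    simp only [Set.mem_sUnion, Set.mem_univ, iff_true]
    exact ⟨sigOf α β ⁻¹' {sigOf α β T}, ⟨T, rfl⟩, rfl⟩
  · rintro V ⟨T₀, rfl⟩ V' ⟨T₁, rfl⟩ hne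
    refine Set.disjoint_left.mpr fun {T} hT hT' => hne ?_
    simp only [id_eq, Set.mem_preimage, Set.mem_singleton_iff] at hT hT'
    show sigOf α β ⁻¹' {sigOf α β T₀} = sigOf α β ⁻¹' {sigOf α β T₁}
    rw [← hT, hT']
  · rintro V ⟨T₀, rfl⟩ T hT T' hT' c
    simp only [Set.mem_preimage, Set.mem_singleton_iff] at hT hT'
    exact ret_apply_eq_of_sig α β T T' (hT.trans hT'.symm) c

end Stmt1
end

section
/- Let L₁ ⊆ L₂ be first-order languages, let T₂ be an L₂-theory, and let T₁ = T₂|L₁ be the set of L₁-sentences belonging to T₂. If the pair (T₁, T₂) has the relative expansion property, then for every existentially closed model M of T₂, the L₁-reduct M|L₁ is an existentially closed model of T₁. -/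
open FirstOrder FirstOrder.Language

universe u v w

namespace Stmt16

/-- The underlying function of a first-order embedding (structures given explicitly). -/
def embFun {L : FirstOrder.Language.{u, v}} {M : Type w} {N : Type w}
    {SM : L.Structure M} {SN : L.Structure N} (f : @Embedding L M N SM SN) : M → N :=
  (@Embedding.toEmbedding L M N SM SN f).toFun

/-- `M`, equipped with the `L`-structure `SM`, is a model of the theory `T`. -/
def ModelsTheory {L : FirstOrder.Language.{u, v}} (T : L.Theory) (M : Type w)
    (SM : L.Structure M) : Prop :=
  @Theory.Model L M SM T

/-- `M` (with structure `SM`) is an existentially closed model of `T`:  it models `T`, and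
for every model `N` of `T` into which `M` embeds, every existential sentence with
quantifier-free matrix and parameters from `M` that holds in `N` already holds in `M`. -/
def IsEC {L : FirstOrder.Language.{u, v}} (T : L.Theory) (M : Type w) (SM : L.Structure M) : Prop :=
  ModelsTheory T M SM ∧
    ∀ (N : Type w) (SN : L.Structure N), ModelsTheory T N SN →
      ∀ f : @Embedding L M N SM SN,
        ∀ (m n : ℕ) (φ : L.BoundedFormula (Fin m) n), φ.IsQF → ∀ a : Fin m → M,
          (∃ b : Fin n → N, @BoundedFormula.Realize L N SN _ _ φ (fun i => embFun f (a i)) b) →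
          ∃ b : Fin n → M, @BoundedFormula.Realize L M SM _ _ φ a b

/-- The pair `(T₁, T₂)` (where `T₁` is the set of `L₁`-sentences in `T₂`, the inclusion of
languages being given by `φL`) has the relative expansion property: whenever `N ⊨ T₂` and
`M ⊨ T₁` with the `L₁`-reduct of `N` embedding into `M`, there is a model `P` of `T₂`
containing `N` (as `L₂`-structure) whose `L₁`-reduct contains `M`, compatibly. -/
def RelExpansion {L₁ L₂ : FirstOrder.Language.{u, v}} (φL : L₁ →ᴸ L₂) (T₁ : L₁.Theory)
    (T₂ : L₂.Theory) : Prop :=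
  ∀ (N : Type w) (SN : L₂.Structure N) (M : Type w) (SM : L₁.Structure M),
    ModelsTheory T₂ N SN → ModelsTheory T₁ M SM →
    ∀ g : @Embedding L₁ N M (@LHom.reduct L₁ L₂ φL N SN) SM,
      ∃ (P : Type w) (SP : L₂.Structure P), ModelsTheory T₂ P SP ∧
        ∃ (h : @Embedding L₂ N P SN SP)
          (k : @Embedding L₁ M P SM (@LHom.reduct L₁ L₂ φL P SP)),
          ∀ x : N, embFun k (embFun g x) = embFun h x

lemma onBoundedFormula_isQF {L₁ L₂ : FirstOrder.Language.{u, v}} (φL : L₁ →ᴸ L₂)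
    {α : Type*} {n : ℕ} {φ : L₁.BoundedFormula α n} (h : φ.IsQF) :
    (φL.onBoundedFormula φ).IsQF := by
  induction h with
  | falsum => exact BoundedFormula.IsQF.falsum
  | of_isAtomic hA =>
    cases hA with
    | equal t₁ t₂ => exact (BoundedFormula.IsAtomic.equal _ _).isQF
    | rel R ts => exact (BoundedFormula.IsAtomic.rel _ _).isQF
  | imp _ _ ih1 ih2 => exact ih1.imp ih2

/-- If `L₁ ⊆ L₂` (witnessed by the injective language morphism `φL`),
`T₂` is an `L₂`-theory and `T₁ = T₂|L₁`, and the pair `(T₁, T₂)` has the relative expansion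
property, then the `L₁`-reduct of any existentially closed model of `T₂` is an existentially
closed model of `T₁`. -/
theorem stmt16 {L₁ L₂ : FirstOrder.Language.{u, v}} (φL : L₁ →ᴸ L₂) (hφ : φL.Injective)
    (T₂ : L₂.Theory) (T₁ : L₁.Theory) (hT₁ : T₁ = {σ : L₁.Sentence | φL.onSentence σ ∈ T₂})
    (hrel : RelExpansion.{u, v, w} φL T₁ T₂)
    (M : Type w) (SM : L₂.Structure M) (hec : IsEC T₂ M SM) :
    IsEC T₁ M (@LHom.reduct L₁ L₂ φL M SM) := by
  letI := SM
  letI : L₁.Structure M := φL.reduct M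
  haveI : φL.IsExpansionOn M := LHom.isExpansionOn_reduct φL M
  have hM2 : M ⊨ T₂ := hec.1
  constructor
  · constructor
    intro σ hσ
    rw [hT₁] at hσ
    have := hM2.realize_of_mem (φL.onSentence σ) hσ
    rwa [LHom.realize_onSentence] at this
  · intro N SN₁ hN f m n φ hQF a ⟨b, hb⟩
    obtain ⟨P, SP, hP, h, k, hk⟩ := hrel M SM N SN₁ hec.1 hN f
    letI := SP
    letI : L₁.Structure P := φL.reduct P
    haveI : φL.IsExpansionOn P := LHom.isExpansionOn_reduct φL P
    have hreal : φ.Realize (embFun k ∘ fun i => embFun f (a i)) (embFun k ∘ b) := by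
      have := (hQF.realize_embedding (M := N) (N := P) k (v := fun i => embFun f (a i))
        (xs := b)).mpr
      exact this hb
    have hreal2 : φ.Realize (fun i => embFun h (a i)) (embFun k ∘ b) := by
      have : (embFun k ∘ fun i => embFun f (a i)) = fun i => embFun h (a i) := by
        funext i; exact hk (a i)
      rwa [this] at hreal
    have hreal3 : (φL.onBoundedFormula φ).Realize (fun i => embFun h (a i)) (embFun k ∘ b) :=
      (LHom.realize_onBoundedFormula φL φ).mpr hreal2
    obtain ⟨c, hc⟩ := hec.2 P SP hP h m n (φL.onBoundedFormula φ)
      (onBoundedFormula_isQF φL hQF) a ⟨embFun k ∘ b, hreal3⟩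
    exact ⟨c, (LHom.realize_onBoundedFormula φL φ).mp hc⟩


end Stmt16
end

section
/- Let L be a first-order language that is the union of an increasing sequence (Lₙ)_{n∈ℕ} of sublanguages, let T be an L-theory, and for each n let Tₙ = T|Lₙ be the set of Lₙ-sentences in T. Suppose that for every n the pair (Tₙ, T) has the relative expansion property and the class of existentially closed models of Tₙ is closed under ultraproducts. Then the class of existentially closed models of T is closed under ultraproducts (equivalently, if each Tₙ has a model companion then T has a model companion). -/
open FirstOrder FirstOrder.Language

universe u v w

namespace Stmt17

/-- The underlying function of a first-order embedding (structures given explicitly). -/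
def embFun {L : FirstOrder.Language.{u, v}} {M : Type w} {N : Type w}
    {SM : L.Structure M} {SN : L.Structure N} (f : @Embedding L M N SM SN) : M → N :=
  (@Embedding.toEmbedding L M N SM SN f).toFun

/-- `M`, equipped with the `L`-structure `SM`, is a model of the theory `T`. -/
def ModelsTheory {L : FirstOrder.Language.{u, v}} (T : L.Theory) (M : Type w)
    (SM : L.Structure M) : Prop :=
  @Theory.Model L M SM T

/-- `M` (with structure `SM`) is an existentially closed model of `T`:  it models `T`, and
for every model `N` of `T` into which `M` embeds, every existential sentence with
quantifier-free matrix and parameters from `M` that holds in `N` already holds in `M`. -/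
def IsEC {L : FirstOrder.Language.{u, v}} (T : L.Theory) (M : Type w)
    (SM : L.Structure M) : Prop :=
  ModelsTheory T M SM ∧
    ∀ (N : Type w) (SN : L.Structure N), ModelsTheory T N SN →
      ∀ f : @Embedding L M N SM SN,
        ∀ (m n : ℕ) (φ : L.BoundedFormula (Fin m) n), φ.IsQF → ∀ a : Fin m → M,
          (∃ b : Fin n → N, @BoundedFormula.Realize L N SN _ _ φ (fun i => embFun f (a i)) b) →
          ∃ b : Fin n → M, @BoundedFormula.Realize L M SM _ _ φ a b

/-- The pair `(T', T)` (with `T'` a theory in the sublanguage given by `φL`) has the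
relative expansion property. -/
def RelExpansion {L₁ L₂ : FirstOrder.Language.{u, v}} (φL : L₁ →ᴸ L₂) (T₁ : L₁.Theory)
    (T₂ : L₂.Theory) : Prop :=
  ∀ (N : Type w) (SN : L₂.Structure N) (M : Type w) (SM : L₁.Structure M),
    ModelsTheory T₂ N SN → ModelsTheory T₁ M SM →
    ∀ g : @Embedding L₁ N M (@LHom.reduct L₁ L₂ φL N SN) SM,
      ∃ (P : Type w) (SP : L₂.Structure P), ModelsTheory T₂ P SP ∧
        ∃ (h : @Embedding L₂ N P SN SP)
          (k : @Embedding L₁ M P SM (@LHom.reduct L₁ L₂ φL P SP)),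
          ∀ x : N, embFun k (embFun g x) = embFun h x

/-- The class of existentially closed models of `T` is closed under ultraproducts. -/
def ECClosedUnderUltraproducts {L : FirstOrder.Language.{u, v}} (T : L.Theory) : Prop :=
  ∀ (ι : Type w) (uu : Ultrafilter ι) (Ms : ι → Type w) (SMs : ∀ i, L.Structure (Ms i)),
    (∀ i, IsEC T (Ms i) (SMs i)) →
    IsEC T ((uu : Filter ι).Product Ms)
      (letI : ∀ i, L.Structure (Ms i) := SMs; inferInstance)

/-! ### Auxiliary lemmas -/

section QF

variable {L₁ L₂ : FirstOrder.Language.{u, v}} (φL : L₁ →ᴸ L₂) {α : Type*} {n : ℕ}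

lemma isQF_on {ψ : L₁.BoundedFormula α n} (h : ψ.IsQF) : (φL.onBoundedFormula ψ).IsQF := by
  induction h with
  | falsum => exact BoundedFormula.IsQF.falsum
  | of_isAtomic h =>
    cases h with
    | equal t₁ t₂ => exact (BoundedFormula.IsAtomic.equal _ _).isQF
    | rel R ts => exact (BoundedFormula.IsAtomic.rel _ _).isQF
  | imp _ _ ih₁ ih₂ => exact ih₁.imp ih₂

lemma isQF_of_on : ∀ {n : ℕ} {ψ : L₁.BoundedFormula α n},
    (φL.onBoundedFormula ψ).IsQF → ψ.IsQF := by
  intro n ψ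
  induction ψ with
  | falsum => exact fun _ => BoundedFormula.isQF_bot
  | equal t₁ t₂ => exact fun _ => (BoundedFormula.IsAtomic.equal _ _).isQF
  | rel R ts => exact fun _ => (BoundedFormula.IsAtomic.rel _ _).isQF
  | imp ψ₁ ψ₂ ih₁ ih₂ =>
    intro h
    cases h with
    | of_isAtomic h => cases h
    | imp h₁ h₂ => exact (ih₁ h₁).imp (ih₂ h₂)
  | all ψ ih =>
    intro h
    cases h with
    | of_isAtomic h => cases h

end QF

section Union

variable {L : FirstOrder.Language.{u, v}} {Ln : ℕ → FirstOrder.Language.{u, v}}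
  {incl : ∀ n, Ln n →ᴸ L}

lemma lift_exists {step : ∀ n, Ln n →ᴸ Ln (n + 1)}
    (hstep : ∀ n, ((incl (n + 1)).comp (step n)) = incl n) (a b : ℕ) (hab : a ≤ b) :
    ∃ ρ : Ln a →ᴸ Ln b, (incl b).comp ρ = incl a := by
  induction b, hab using Nat.le_induction with
  | base => exact ⟨LHom.id _, LHom.comp_id _⟩
  | succ b hb ih =>
    obtain ⟨ρ, hρ⟩ := ih
    refine ⟨(step b).comp ρ, ?_⟩
    rw [← LHom.comp_assoc, hstep, hρ]

lemma on_comp_fun {a b k : ℕ} (ρ : Ln a →ᴸ Ln b) (hρ : (incl b).comp ρ = incl a)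
    (g : (Ln a).Functions k) :
    (incl b).onFunction (ρ.onFunction g) = (incl a).onFunction g := by
  rw [← hρ]; rfl

lemma on_comp_rel {a b k : ℕ} (ρ : Ln a →ᴸ Ln b) (hρ : (incl b).comp ρ = incl a)
    (r : (Ln a).Relations k) :
    (incl b).onRelation (ρ.onRelation r) = (incl a).onRelation r := by
  rw [← hρ]; rfl

lemma on_comp_term {a b : ℕ} (ρ : Ln a →ᴸ Ln b) (hρ : (incl b).comp ρ = incl a)
    {β : Type*} (s : (Ln a).Term β) :
    (incl b).onTerm (ρ.onTerm s) = (incl a).onTerm s := by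
  rw [← hρ]
  exact (congrFun (LHom.comp_onTerm _ _) s).symm

lemma on_comp_formula {a b : ℕ} (ρ : Ln a →ᴸ Ln b) (hρ : (incl b).comp ρ = incl a)
    {α : Type*} {n : ℕ} (ψ : (Ln a).BoundedFormula α n) :
    (incl b).onBoundedFormula (ρ.onBoundedFormula ψ) = (incl a).onBoundedFormula ψ := by
  rw [← hρ]
  exact (congrFun (LHom.comp_onBoundedFormula _ _) ψ).symm

lemma exists_term
    (hunionF : ∀ (k : ℕ) (f : L.Functions k), ∃ n g, (incl n).onFunction g = f)
    (lift : ∀ a b, a ≤ b → ∃ ρ : Ln a →ᴸ Ln b, (incl b).comp ρ = incl a)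
    {β : Type*} (t : L.Term β) :
    ∃ (a : ℕ) (s : (Ln a).Term β), (incl a).onTerm s = t := by
  induction t with
  | var i => exact ⟨0, Term.var i, rfl⟩
  | @func k f ts ih =>
    obtain ⟨a₀, g, hg⟩ := hunionF k f
    choose A S hS using ih
    set b := max a₀ (Finset.univ.sup A) with hb
    obtain ⟨ρ₀, hρ₀⟩ := lift a₀ b (le_max_left _ _)
    have hA : ∀ i, A i ≤ b :=
      fun i => le_trans (Finset.le_sup (Finset.mem_univ i)) (le_max_right _ _)
    choose ρ hρ using fun i => lift (A i) b (hA i)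
    refine ⟨b, Term.func (ρ₀.onFunction g) fun i => (ρ i).onTerm (S i), ?_⟩
    show Term.func ((incl b).onFunction (ρ₀.onFunction g))
        (fun i => (incl b).onTerm ((ρ i).onTerm (S i))) = Term.func f ts
    rw [on_comp_fun ρ₀ hρ₀, hg]
    exact congrArg _ (funext fun i => by rw [on_comp_term (ρ i) (hρ i), hS i])

lemma exists_formula
    (hunionF : ∀ (k : ℕ) (f : L.Functions k), ∃ n g, (incl n).onFunction g = f)
    (hunionR : ∀ (k : ℕ) (r : L.Relations k), ∃ n s, (incl n).onRelation s = r)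
    (lift : ∀ a b, a ≤ b → ∃ ρ : Ln a →ᴸ Ln b, (incl b).comp ρ = incl a)
    {α : Type*} : ∀ {n : ℕ} (φ : L.BoundedFormula α n),
      ∃ (a : ℕ) (ψ : (Ln a).BoundedFormula α n), (incl a).onBoundedFormula ψ = φ := by
  intro n φ
  induction φ with
  | falsum => exact ⟨0, BoundedFormula.falsum, rfl⟩
  | equal t₁ t₂ =>
    obtain ⟨a₁, s₁, h₁⟩ := exists_term hunionF lift t₁
    obtain ⟨a₂, s₂, h₂⟩ := exists_term hunionF lift t₂
    obtain ⟨ρ₁, hρ₁⟩ := lift a₁ (max a₁ a₂) (le_max_left _ _)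
    obtain ⟨ρ₂, hρ₂⟩ := lift a₂ (max a₁ a₂) (le_max_right _ _)
    refine ⟨max a₁ a₂, BoundedFormula.equal (ρ₁.onTerm s₁) (ρ₂.onTerm s₂), ?_⟩
    show BoundedFormula.equal ((incl _).onTerm (ρ₁.onTerm s₁)) ((incl _).onTerm (ρ₂.onTerm s₂))
        = BoundedFormula.equal t₁ t₂
    rw [on_comp_term ρ₁ hρ₁, on_comp_term ρ₂ hρ₂, h₁, h₂]
  | @rel n k R ts =>
    obtain ⟨a₀, r, hr⟩ := hunionR k R
    choose A S hS using fun i => exists_term hunionF lift (ts i)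
    set b := max a₀ (Finset.univ.sup A) with hb
    obtain ⟨ρ₀, hρ₀⟩ := lift a₀ b (le_max_left _ _)
    have hA : ∀ i, A i ≤ b :=
      fun i => le_trans (Finset.le_sup (Finset.mem_univ i)) (le_max_right _ _)
    choose ρ hρ using fun i => lift (A i) b (hA i)
    refine ⟨b, BoundedFormula.rel (ρ₀.onRelation r) fun i => (ρ i).onTerm (S i), ?_⟩
    show BoundedFormula.rel ((incl b).onRelation (ρ₀.onRelation r))
        (fun i => (incl b).onTerm ((ρ i).onTerm (S i))) = BoundedFormula.rel R ts
    rw [on_comp_rel ρ₀ hρ₀, hr]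
    exact congrArg _ (funext fun i => by rw [on_comp_term (ρ i) (hρ i), hS i])
  | imp φ₁ φ₂ ih₁ ih₂ =>
    obtain ⟨a₁, ψ₁, h₁⟩ := ih₁
    obtain ⟨a₂, ψ₂, h₂⟩ := ih₂
    obtain ⟨ρ₁, hρ₁⟩ := lift a₁ (max a₁ a₂) (le_max_left _ _)
    obtain ⟨ρ₂, hρ₂⟩ := lift a₂ (max a₁ a₂) (le_max_right _ _)
    refine ⟨max a₁ a₂, (ρ₁.onBoundedFormula ψ₁).imp (ρ₂.onBoundedFormula ψ₂), ?_⟩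
    show ((incl _).onBoundedFormula (ρ₁.onBoundedFormula ψ₁)).imp
        ((incl _).onBoundedFormula (ρ₂.onBoundedFormula ψ₂)) = φ₁.imp φ₂
    rw [on_comp_formula ρ₁ hρ₁, on_comp_formula ρ₂ hρ₂, h₁, h₂]
  | all φ ih =>
    obtain ⟨a, ψ, h⟩ := ih
    exact ⟨a, ψ.all, by show ((incl a).onBoundedFormula ψ).all = _; rw [h]⟩

end Union

section Reduct

variable {L₁ L₂ : FirstOrder.Language.{u, v}} (φL : L₁ →ᴸ L₂)

/-- The reduct of an embedding along a language map. -/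
def reductEmb {M N : Type w} (SM : L₂.Structure M) (SN : L₂.Structure N)
    (f : @Embedding L₂ M N SM SN) :
    @Embedding L₁ M N (φL.reduct M) (φL.reduct N) :=
  letI := SM; letI := SN; letI := φL.reduct M; letI := φL.reduct N
  { toEmbedding := f.toEmbedding
    map_fun' := fun {n} g x => f.map_fun' (φL.onFunction g) x
    map_rel' := fun {n} r x => f.map_rel' (φL.onRelation r) x }

lemma modelsTheory_reduct (T₁ : L₁.Theory) (T₂ : L₂.Theory)
    (hT : ∀ σ, σ ∈ T₁ → φL.onSentence σ ∈ T₂) (N : Type w) (SN : L₂.Structure N)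
    (h : ModelsTheory T₂ N SN) : ModelsTheory T₁ N (φL.reduct N) := by
  letI := SN
  letI := φL.reduct N
  constructor
  intro σ hσ
  exact (φL.realize_onSentence (M := N) σ).mp (h.realize_of_mem (φL.onSentence σ) (hT σ hσ))

lemma isEC_reduct (T₁ : L₁.Theory) (T₂ : L₂.Theory)
    (hT : ∀ σ, σ ∈ T₁ → φL.onSentence σ ∈ T₂)
    (hrel : RelExpansion.{u, v, w} φL T₁ T₂)
    (M : Type w) (SM : L₂.Structure M) (h : IsEC T₂ M SM) :
    IsEC T₁ M (φL.reduct M) := by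
  refine ⟨modelsTheory_reduct φL T₁ T₂ hT M SM h.1, ?_⟩
  intro P SP hP g m k ψ hQF a hex
  obtain ⟨Q, SQ, hQ, hEmb, kEmb, hcomm⟩ := hrel M SM P SP h.1 hP g
  obtain ⟨b, hb⟩ := hex
  letI := SM
  letI := SP
  letI := SQ
  letI := φL.reduct M
  letI := φL.reduct Q
  have hQreal : ψ.Realize (M := Q) (fun i => embFun hEmb (a i)) (fun i => embFun kEmb (b i)) := by
    have h1 := (hQF.realize_embedding kEmb (v := fun i => embFun g (a i)) (xs := b)).mpr hb
    have h2 : (⇑kEmb ∘ fun i => embFun g (a i)) = fun i => embFun hEmb (a i) :=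
      funext fun i => hcomm (a i)
    rw [h2] at h1
    exact h1
  have hQ2 : (φL.onBoundedFormula ψ).Realize (M := Q)
      (fun i => embFun hEmb (a i)) (fun i => embFun kEmb (b i)) :=
    (φL.realize_onBoundedFormula ψ).mpr hQreal
  obtain ⟨c, hc⟩ := h.2 Q SQ hQ hEmb m k (φL.onBoundedFormula ψ) (isQF_on φL hQF) a
    ⟨fun i => embFun kEmb (b i), hQ2⟩
  exact ⟨c, (φL.realize_onBoundedFormula ψ).mp hc⟩

end Reduct


/-- Let `L` be the union of an increasing sequence `(Lₙ)` of sublanguages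
(the inclusions `inclₙ : Lₙ →ᴸ L` are injective, factor through each other compatibly, and
every symbol of `L` lies in some `Lₙ`), let `T` be an `L`-theory and `Tₙ = T|Lₙ`.  If for
every `n` the pair `(Tₙ, T)` has the relative expansion property and the class of
existentially closed models of `Tₙ` is closed under ultraproducts, then the class of
existentially closed models of `T` is closed under ultraproducts. -/
theorem stmt17 {L : FirstOrder.Language.{u, v}} (Ln : ℕ → FirstOrder.Language.{u, v})
    (incl : ∀ n, Ln n →ᴸ L) (hinj : ∀ n, (incl n).Injective)
    (step : ∀ n, Ln n →ᴸ Ln (n + 1))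
    (hstep : ∀ n, ((incl (n + 1)).comp (step n)) = incl n)
    (hunionF : ∀ (k : ℕ) (f : L.Functions k), ∃ n g, (incl n).onFunction g = f)
    (hunionR : ∀ (k : ℕ) (r : L.Relations k), ∃ n s, (incl n).onRelation s = r)
    (T : L.Theory) (Tn : ∀ n, (Ln n).Theory)
    (hTn : ∀ n, Tn n = {σ : (Ln n).Sentence | (incl n).onSentence σ ∈ T})
    (hrel : ∀ n, RelExpansion.{u, v, w} (incl n) (Tn n) T)
    (hec : ∀ n, ECClosedUnderUltraproducts.{u, v, w} (Tn n)) :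
    ECClosedUnderUltraproducts.{u, v, w} T := by
  have lift : ∀ a b, a ≤ b → ∃ ρ : Ln a →ᴸ Ln b, (incl b).comp ρ = incl a :=
    fun a b hab => lift_exists hstep a b hab
  have hTsub : ∀ n (σ : (Ln n).Sentence), σ ∈ Tn n → (incl n).onSentence σ ∈ T := by
    intro n σ hσ
    rw [hTn n] at hσ
    exact hσ
  intro ι uu Ms SMs hMs
  letI := SMs
  have hECprod : ∀ n, IsEC (Tn n) ((uu : Filter ι).Product Ms)
      (letI : ∀ i, (Ln n).Structure (Ms i) := fun i => (incl n).reduct (Ms i);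
        inferInstance) :=
    fun n => hec n ι uu Ms (fun i => (incl n).reduct (Ms i))
      (fun i => isEC_reduct (incl n) (Tn n) T (hTsub n) (hrel n) (Ms i) (SMs i) (hMs i))
  constructor
  · -- the ultraproduct models `T`
    constructor
    intro σ hσ
    obtain ⟨n, τ, hτ⟩ := exists_formula hunionF hunionR lift σ
    have hτT : τ ∈ Tn n := by
      rw [hTn n]
      show (incl n).onSentence τ ∈ T
      have : (incl n).onSentence τ = σ := hτ
      rw [this]
      exact hσ
    letI := (incl n).reduct ((uu : Filter ι).Product Ms)
    have hred : @Sentence.Realize (Ln n) ((uu : Filter ι).Product Ms)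
        ((incl n).reduct ((uu : Filter ι).Product Ms)) τ :=
      (hECprod n).1.realize_of_mem τ hτT
    have : ((uu : Filter ι).Product Ms) ⊨ (incl n).onSentence τ :=
      ((incl n).realize_onSentence (M := (uu : Filter ι).Product Ms) τ).mpr hred
    rw [show (incl n).onSentence τ = σ from hτ] at this
    exact this
  · -- existential closedness
    intro N SN hN f m k φ hQF a hex
    obtain ⟨n, ψ, hψ⟩ := exists_formula hunionF hunionR lift φ
    subst hψ
    letI := SN
    letI := (incl n).reduct N
    letI := (incl n).reduct ((uu : Filter ι).Product Ms)
    have hQFψ : ψ.IsQF := isQF_of_on (incl n) hQF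
    have hNred : ModelsTheory (Tn n) N ((incl n).reduct N) :=
      modelsTheory_reduct (incl n) (Tn n) T (hTsub n) N SN hN
    have hexred : ∃ b : Fin k → N,
        @BoundedFormula.Realize (Ln n) N ((incl n).reduct N) _ _ ψ
          (fun i => embFun f (a i)) b := by
      obtain ⟨b, hb⟩ := hex
      exact ⟨b, ((incl n).realize_onBoundedFormula ψ).mp hb⟩
    obtain ⟨b, hb⟩ := (hECprod n).2 N ((incl n).reduct N) hNred
      (reductEmb (incl n) _ SN f) m k ψ hQFψ a hexred
    exact ⟨b, ((incl n).realize_onBoundedFormula (M := (uu : Filter ι).Product Ms) ψ).mpr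
      (by exact hb)⟩


end Stmt17
end
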